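/- (Series–parallel decomposition.) Let H₁ and H₂ be finite simple graphs on disjoint vertex sets, with s, u two distinct vertices in the same connected component of H₁, and v, t two distinct vertices in the same connected component of H₂. Let G be the graph on V(H₁) ∪ V(H₂) whose edge set is E(H₁) ∪ E(H₂) ∪ {{s,t}, {u,v}}. Then, writing R₁ = R_{H₁}(s,u) and R₂ = R_{H₂}(v,t), the s–t effective resistance in G is R_G(s,t) = (1 + R₁ + R₂)/(2 + R₁ + R₂); equivalently 1/R_G(s,t) = 1 + 1/(R₁ + 1 + R₂). In particular R_G(s,t) < 1. -/

import Mathlib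

open Classical in
/-- The Dirichlet energy `Σ_{{u,v} ∈ E} (φ u - φ v)²` of a potential `φ`,
written as half the sum over ordered pairs. -/
noncomputable def energy {V : Type*} [Fintype V] (G : SimpleGraph V) (φ : V → ℝ) : ℝ :=
  (1/2) * ∑ u : V, ∑ v : V, if G.Adj u v then (φ u - φ v)^2 else 0

/-- The `s`-`t` effective resistance: the reciprocal of the minimal Dirichlet energy among
potentials with `φ s = 1` and `φ t = 0`. -/
noncomputable def effRes {V : Type*} [Fintype V] (G : SimpleGraph V) (s t : V) : ℝ :=
  1 / sInf (energy G '' {φ : V → ℝ | φ s = 1 ∧ φ t = 0})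

section helpers
open Classical
set_option linter.unusedSectionVars false
variable {V : Type*} [Fintype V]

lemma energy_nonneg (G : SimpleGraph V) (φ : V → ℝ) : 0 ≤ energy G φ := by
  unfold energy
  apply mul_nonneg (by norm_num)
  refine Finset.sum_nonneg fun x _ => Finset.sum_nonneg fun y _ => ?_
  split <;> positivity

lemma energy_affine (G : SimpleGraph V) (ψ : V → ℝ) (c d : ℝ) :
    energy G (fun x => c + d * ψ x) = d^2 * energy G ψ := by
  have h : (∑ x : V, ∑ y : V, if G.Adj x y then ((c + d * ψ x) - (c + d * ψ y))^2 else 0)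
      = d^2 * ∑ x : V, ∑ y : V, (if G.Adj x y then (ψ x - ψ y)^2 else 0) := by
    rw [Finset.mul_sum]
    refine Finset.sum_congr rfl fun x _ => ?_
    rw [Finset.mul_sum]
    refine Finset.sum_congr rfl fun y _ => ?_
    by_cases hxy : G.Adj x y
    · rw [if_pos hxy, if_pos hxy]; ring
    · rw [if_neg hxy, if_neg hxy]; ring
  unfold energy
  rw [h]; ring

lemma eset_nonempty (G : SimpleGraph V) {s t : V} (hst : s ≠ t) :
    (energy G '' {φ : V → ℝ | φ s = 1 ∧ φ t = 0}).Nonempty := by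
  classical
  exact ⟨_, ⟨fun x => if x = s then 1 else 0, ⟨by simp, by simp [hst.symm]⟩, rfl⟩⟩

lemma eset_bdd (G : SimpleGraph V) (s t : V) :
    BddBelow (energy G '' {φ : V → ℝ | φ s = 1 ∧ φ t = 0}) := by
  refine ⟨0, ?_⟩
  rintro x ⟨φ, -, rfl⟩
  exact energy_nonneg G φ

lemma dart_telescope {G : SimpleGraph V} {a b : V} (p : G.Walk a b) (φ : V → ℝ) :
    (p.darts.map fun d => φ d.fst - φ d.snd).sum = φ a - φ b := by
  induction p with
  | nil => simp
  | cons h p ih => simp [ih]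

lemma list_sq_sum_le (l : List ℝ) : l.sum ^ 2 ≤ l.length * (l.map (·^2)).sum := by
  induction l with
  | nil => simp
  | cons a l ih =>
    simp only [List.sum_cons, List.map_cons, List.length_cons]
    push_cast
    have hq : 0 ≤ (l.map (·^2)).sum := by
      refine List.sum_nonneg ?_
      intro x hx
      simp only [List.mem_map] at hx
      obtain ⟨y, -, rfl⟩ := hx
      positivity
    rcases Nat.eq_zero_or_pos l.length with h0 | h0
    · obtain rfl : l = [] := List.length_eq_zero_iff.mp h0
      simp
    · have hn : (1:ℝ) ≤ l.length := by exact_mod_cast h0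
      nlinarith [sq_nonneg ((l.length : ℝ) * a - l.sum), ih, hq, hn,
        mul_nonneg (by linarith : (0:ℝ) ≤ (l.length:ℝ)) hq]

lemma energy_ge_trail (G : SimpleGraph V) (φ : V → ℝ) {a b : V} (p : G.Walk a b)
    (hp : p.IsTrail) :
    (1/2) * (p.darts.map fun d => (φ d.fst - φ d.snd)^2).sum ≤ energy G φ := by
  classical
  have hnd : p.darts.Nodup := by
    have := hp.edges_nodup
    rw [SimpleGraph.Walk.edges] at this
    exact this.of_map _
  have hnd2 : (p.darts.map SimpleGraph.Dart.toProd).Nodup := by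
    refine hnd.map ?_
    intro d d' h
    exact SimpleGraph.Dart.ext _ _ h
  unfold energy
  set T : Finset (V × V) := (p.darts.map SimpleGraph.Dart.toProd).toFinset with hT
  have key : T.sum (fun q => (φ q.1 - φ q.2)^2)
      ≤ ∑ x : V, ∑ y : V, if G.Adj x y then (φ x - φ y)^2 else 0 := by
    have e1 : T.sum (fun q => (φ q.1 - φ q.2)^2)
        = T.sum (fun q : V × V => if G.Adj q.1 q.2 then (φ q.1 - φ q.2)^2 else 0) := by
      refine Finset.sum_congr rfl fun q hq => ?_
      simp only [hT, List.mem_toFinset, List.mem_map] at hq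
      obtain ⟨d, -, rfl⟩ := hq
      rw [if_pos d.adj]
    have e2 : T.sum (fun q : V × V => if G.Adj q.1 q.2 then (φ q.1 - φ q.2)^2 else 0)
        ≤ (Finset.univ ×ˢ Finset.univ).sum
            (fun q : V × V => if G.Adj q.1 q.2 then (φ q.1 - φ q.2)^2 else 0) := by
      refine Finset.sum_le_sum_of_subset_of_nonneg (Finset.subset_univ _) ?_
      intro q _ _
      split <;> positivity
    rw [Finset.sum_product] at e2
    rw [e1]; exact e2
  have hsum : ((p.darts.map SimpleGraph.Dart.toProd).toFinset).sum
        (fun q => (φ q.1 - φ q.2)^2)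
      = (p.darts.map fun d => (φ d.fst - φ d.snd)^2).sum := by
    rw [List.sum_toFinset _ hnd2, List.map_map]
    rfl
  nlinarith [key, hsum]

lemma energy_sInf_pos (G : SimpleGraph V) {s t : V} (hst : s ≠ t) (hr : G.Reachable s t) :
    0 < sInf (energy G '' {φ : V → ℝ | φ s = 1 ∧ φ t = 0}) := by
  classical
  obtain ⟨w⟩ := hr
  set p := w.bypass with hp
  have hpath : p.IsPath := w.bypass_isPath
  have hL : 0 < p.length := by
    rcases Nat.eq_zero_or_pos p.length with h | h
    · exact absurd (w.bypass.eq_of_length_eq_zero h) hst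
    · exact h
  have hLR : (0:ℝ) < p.length := by exact_mod_cast hL
  refine lt_of_lt_of_le (show (0:ℝ) < 1/(2*p.length) by positivity) ?_
  refine le_csInf (eset_nonempty G hst) ?_
  rintro x ⟨φ, ⟨hs, ht⟩, rfl⟩
  have htel : (p.darts.map fun d => φ d.fst - φ d.snd).sum = 1 := by
    rw [dart_telescope, hs, ht]; ring
  have hcs := list_sq_sum_le (p.darts.map fun d => φ d.fst - φ d.snd)
  rw [htel, List.length_map, SimpleGraph.Walk.length_darts, List.map_map] at hcs
  have h2 : (fun x => x^2) ∘ (fun d : G.Dart => φ d.fst - φ d.snd)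
      = fun d : G.Dart => (φ d.fst - φ d.snd)^2 := rfl
  rw [h2] at hcs
  have := energy_ge_trail G φ p hpath.isTrail
  have hsq : 1/(p.length : ℝ) ≤ (p.darts.map fun d => (φ d.fst - φ d.snd)^2).sum := by
    rw [div_le_iff₀ hLR]
    nlinarith [hcs]
  calc 1/(2*(p.length:ℝ)) = (1/2) * (1/(p.length:ℝ)) := by ring
    _ ≤ (1/2) * (p.darts.map fun d => (φ d.fst - φ d.snd)^2).sum := by linarith
    _ ≤ energy G φ := this

lemma energy_boundary_le (G : SimpleGraph V) (s t : V)
    (φ : V → ℝ) (c d : ℝ) (hs : φ s = c) (ht : φ t = d) :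
    (c - d)^2 * sInf (energy G '' {ψ : V → ℝ | ψ s = 1 ∧ ψ t = 0}) ≤ energy G φ := by
  by_cases h : c = d
  · simp only [h, sub_self, ne_eq]
    rw [zero_pow (by norm_num), zero_mul]
    exact energy_nonneg G φ
  · have hcd : c - d ≠ 0 := sub_ne_zero.mpr h
    set ψ : V → ℝ := fun x => (φ x - d) / (c - d) with hψ
    have hφ : φ = fun x => d + (c - d) * ψ x := by
      funext x
      have hmc : (c - d) * ((φ x - d) / (c - d)) = φ x - d := by field_simp
      simp only [hψ]; linarith
    rw [hφ, energy_affine]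
    have hmem : energy G ψ ∈ energy G '' {ψ : V → ℝ | ψ s = 1 ∧ ψ t = 0} := by
      refine ⟨ψ, ⟨?_, ?_⟩, rfl⟩
      · simp [hψ, hs, div_self hcd]
      · simp [hψ, ht]
    exact mul_le_mul_of_nonneg_left (csInf_le (eset_bdd G s t) hmem) (sq_nonneg _)

lemma key_ineq (E₁ E₂ a b : ℝ) (h₁ : 0 < E₁) (h₂ : 0 < E₂) :
    E₁*E₂/(E₁+E₂+E₁*E₂) ≤ (1-a)^2*E₁ + (a-b)^2 + b^2*E₂ := by
  rw [div_le_iff₀ (by positivity)]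
  nlinarith [mul_nonneg h₂.le (sq_nonneg ((1-a)*E₁ - (a-b))),
    sq_nonneg ((1-a)*E₁ - b*E₂),
    mul_nonneg h₁.le (sq_nonneg ((a-b) - b*E₂))]

end helpers

open Classical

lemma energy_decomp {V₁ V₂ : Type*} [Fintype V₁] [Fintype V₂]
    (H₁ : SimpleGraph V₁) (H₂ : SimpleGraph V₂)
    (s u : V₁) (v t : V₂) (hsu : s ≠ u) (hvt : v ≠ t)
    (G : SimpleGraph (V₁ ⊕ V₂))
    (hG : ∀ a b : V₁ ⊕ V₂, G.Adj a b ↔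
      ((∃ x y : V₁, a = Sum.inl x ∧ b = Sum.inl y ∧ H₁.Adj x y) ∨
       (∃ x y : V₂, a = Sum.inr x ∧ b = Sum.inr y ∧ H₂.Adj x y) ∨
       (a = Sum.inl s ∧ b = Sum.inr t) ∨ (a = Sum.inr t ∧ b = Sum.inl s) ∨
       (a = Sum.inl u ∧ b = Sum.inr v) ∨ (a = Sum.inr v ∧ b = Sum.inl u)))
    (φ : V₁ ⊕ V₂ → ℝ) :
    energy G φ = energy H₁ (fun x => φ (Sum.inl x)) + energy H₂ (fun y => φ (Sum.inr y))
      + (φ (Sum.inl s) - φ (Sum.inr t))^2 + (φ (Sum.inl u) - φ (Sum.inr v))^2 := by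
  have hLL : ∀ x y : V₁, G.Adj (Sum.inl x) (Sum.inl y) ↔ H₁.Adj x y := by
    intro x y; rw [hG]
    constructor
    · rintro (⟨a,b,ha,hb,h⟩|⟨a,b,ha,hb,h⟩|⟨ha,hb⟩|⟨ha,hb⟩|⟨ha,hb⟩|⟨ha,hb⟩) <;> simp_all
    · intro h; exact Or.inl ⟨x, y, rfl, rfl, h⟩
  have hRR : ∀ x y : V₂, G.Adj (Sum.inr x) (Sum.inr y) ↔ H₂.Adj x y := by
    intro x y; rw [hG]
    constructor
    · rintro (⟨a,b,ha,hb,h⟩|⟨a,b,ha,hb,h⟩|⟨ha,hb⟩|⟨ha,hb⟩|⟨ha,hb⟩|⟨ha,hb⟩) <;> simp_all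
    · intro h; exact Or.inr (Or.inl ⟨x, y, rfl, rfl, h⟩)
  have hLR : ∀ (x : V₁) (y : V₂), G.Adj (Sum.inl x) (Sum.inr y) ↔
      ((x = s ∧ y = t) ∨ (x = u ∧ y = v)) := by
    intro x y; rw [hG]
    constructor
    · rintro (⟨a,b,ha,hb,h⟩|⟨a,b,ha,hb,h⟩|⟨ha,hb⟩|⟨ha,hb⟩|⟨ha,hb⟩|⟨ha,hb⟩) <;> simp_all
    · rintro (⟨rfl,rfl⟩|⟨rfl,rfl⟩)
      · exact Or.inr (Or.inr (Or.inl ⟨rfl, rfl⟩))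
      · exact Or.inr (Or.inr (Or.inr (Or.inr (Or.inl ⟨rfl, rfl⟩))))
  have hRL : ∀ (x : V₂) (y : V₁), G.Adj (Sum.inr x) (Sum.inl y) ↔
      ((x = t ∧ y = s) ∨ (x = v ∧ y = u)) := by
    intro x y; rw [hG]
    constructor
    · rintro (⟨a,b,ha,hb,h⟩|⟨a,b,ha,hb,h⟩|⟨ha,hb⟩|⟨ha,hb⟩|⟨ha,hb⟩|⟨ha,hb⟩) <;> simp_all
    · rintro (⟨rfl,rfl⟩|⟨rfl,rfl⟩)
      · exact Or.inr (Or.inr (Or.inr (Or.inl ⟨rfl, rfl⟩)))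
      · exact Or.inr (Or.inr (Or.inr (Or.inr (Or.inr ⟨rfl, rfl⟩))))
  clear hG
  have pairLR : ∀ (f : V₁ → V₂ → ℝ),
      (∑ x : V₁, ∑ y : V₂, if G.Adj (Sum.inl x) (Sum.inr y) then f x y else 0)
        = f s t + f u v := by
    intro f
    have step : ∀ (x : V₁) (y : V₂),
        (if G.Adj (Sum.inl x) (Sum.inr y) then f x y else 0)
          = (if y = t then (if x = s then f x y else 0) else 0)
            + (if y = v then (if x = u then f x y else 0) else 0) := by
      intro x y
      rw [if_congr (hLR x y) rfl rfl]
      by_cases h1 : x = s <;> by_cases h2 : y = t <;> by_cases h3 : x = u <;>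
        by_cases h4 : y = v <;>
        first
          | (exact absurd (h1.symm.trans h3) hsu)
          | simp [h1, h2, h3, h4, hsu, Ne.symm hsu, hvt, Ne.symm hvt]
    simp only [step, Finset.sum_add_distrib, Finset.sum_ite_eq', Finset.mem_univ, if_true]
  have pairRL : ∀ (f : V₂ → V₁ → ℝ),
      (∑ x : V₂, ∑ y : V₁, if G.Adj (Sum.inr x) (Sum.inl y) then f x y else 0)
        = f t s + f v u := by
    intro f
    have step : ∀ (x : V₂) (y : V₁),
        (if G.Adj (Sum.inr x) (Sum.inl y) then f x y else 0)
          = (if y = s then (if x = t then f x y else 0) else 0)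
            + (if y = u then (if x = v then f x y else 0) else 0) := by
      intro x y
      rw [if_congr (hRL x y) rfl rfl]
      by_cases h1 : x = t <;> by_cases h2 : y = s <;> by_cases h3 : x = v <;>
        by_cases h4 : y = u <;>
        first
          | (exact absurd (h2.symm.trans h4) hsu)
          | simp [h1, h2, h3, h4, hsu, Ne.symm hsu, hvt, Ne.symm hvt]
    simp only [step, Finset.sum_add_distrib, Finset.sum_ite_eq', Finset.mem_univ, if_true]
  unfold energy
  rw [Fintype.sum_sum_type]
  simp only [Fintype.sum_sum_type]
  rw [Finset.sum_add_distrib, Finset.sum_add_distrib]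
  have eLL : (∑ x : V₁, ∑ y : V₁, if G.Adj (Sum.inl x) (Sum.inl y)
        then (φ (Sum.inl x) - φ (Sum.inl y))^2 else 0)
      = ∑ x : V₁, ∑ y : V₁, if H₁.Adj x y then (φ (Sum.inl x) - φ (Sum.inl y))^2 else 0 :=
    Finset.sum_congr rfl fun x _ => Finset.sum_congr rfl fun y _ =>
      if_congr (hLL x y) rfl rfl
  have eRR : (∑ x : V₂, ∑ y : V₂, if G.Adj (Sum.inr x) (Sum.inr y)
        then (φ (Sum.inr x) - φ (Sum.inr y))^2 else 0)
      = ∑ x : V₂, ∑ y : V₂, if H₂.Adj x y then (φ (Sum.inr x) - φ (Sum.inr y))^2 else 0 :=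
    Finset.sum_congr rfl fun x _ => Finset.sum_congr rfl fun y _ =>
      if_congr (hRR x y) rfl rfl
  rw [eLL, eRR, pairLR (fun x y => (φ (Sum.inl x) - φ (Sum.inr y))^2),
    pairRL (fun x y => (φ (Sum.inr x) - φ (Sum.inl y))^2)]
  ring

/-- **Series–parallel decomposition.**
Let `H₁`, `H₂` be graphs on disjoint vertex sets (modelled by the sum type `V₁ ⊕ V₂`), with
`s ≠ u` in the same connected component of `H₁` and `v ≠ t` in the same connected component
of `H₂`.  Let `G` be the graph on `V₁ ⊕ V₂` whose edges are those of `H₁`, those of `H₂`,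
together with `{s,t}` and `{u,v}`.  Then, writing `R₁ = R_{H₁}(s,u)` and `R₂ = R_{H₂}(v,t)`,
the `s`–`t` effective resistance in `G` is `(1 + R₁ + R₂)/(2 + R₁ + R₂)`; in particular it
is `< 1`. -/
theorem effRes_series_parallel
    {V₁ V₂ : Type*} [Fintype V₁] [Fintype V₂]
    (H₁ : SimpleGraph V₁) (H₂ : SimpleGraph V₂)
    (s u : V₁) (hsu : s ≠ u) (hreach₁ : H₁.Reachable s u)
    (v t : V₂) (hvt : v ≠ t) (hreach₂ : H₂.Reachable v t)
    (G : SimpleGraph (V₁ ⊕ V₂))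
    (hG : ∀ a b : V₁ ⊕ V₂, G.Adj a b ↔
      ((∃ x y : V₁, a = Sum.inl x ∧ b = Sum.inl y ∧ H₁.Adj x y) ∨
       (∃ x y : V₂, a = Sum.inr x ∧ b = Sum.inr y ∧ H₂.Adj x y) ∨
       (a = Sum.inl s ∧ b = Sum.inr t) ∨ (a = Sum.inr t ∧ b = Sum.inl s) ∨
       (a = Sum.inl u ∧ b = Sum.inr v) ∨ (a = Sum.inr v ∧ b = Sum.inl u))) :
    effRes G (Sum.inl s) (Sum.inr t) =
        (1 + effRes H₁ s u + effRes H₂ v t) / (2 + effRes H₁ s u + effRes H₂ v t) ∧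
      effRes G (Sum.inl s) (Sum.inr t) < 1 := by
  have hvt' : v ≠ t := hvt
  set E₁ := sInf (energy H₁ '' {φ : V₁ → ℝ | φ s = 1 ∧ φ u = 0}) with hE₁def
  set E₂ := sInf (energy H₂ '' {φ : V₂ → ℝ | φ v = 1 ∧ φ t = 0}) with hE₂def
  have hE₁ : 0 < E₁ := energy_sInf_pos H₁ hsu hreach₁
  have hE₂ : 0 < E₂ := energy_sInf_pos H₂ hvt hreach₂
  set D : ℝ := E₁ + E₂ + E₁*E₂ with hD
  have hDpos : 0 < D := by rw [hD]; positivity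
  have hstG : (Sum.inl s : V₁ ⊕ V₂) ≠ Sum.inr t := by simp
  -- lower bound for elements of the G-energy set
  have hlow : ∀ x ∈ energy G '' {φ : V₁ ⊕ V₂ → ℝ | φ (Sum.inl s) = 1 ∧ φ (Sum.inr t) = 0},
      1 + E₁*E₂/D ≤ x := by
    rintro x ⟨φ, ⟨hφs, hφt⟩, rfl⟩
    rw [energy_decomp H₁ H₂ s u v t hsu hvt G hG φ, hφs, hφt]
    have h1 : (1 - φ (Sum.inl u))^2 * E₁ ≤ energy H₁ (fun x => φ (Sum.inl x)) :=
      energy_boundary_le H₁ s u _ 1 (φ (Sum.inl u)) hφs rfl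
    have h2 : (φ (Sum.inr v) - 0)^2 * E₂ ≤ energy H₂ (fun y => φ (Sum.inr y)) :=
      energy_boundary_le H₂ v t _ (φ (Sum.inr v)) 0 rfl hφt
    have h3 := key_ineq E₁ E₂ (φ (Sum.inl u)) (φ (Sum.inr v)) hE₁ hE₂
    rw [← hD] at h3
    nlinarith [h1, h2, h3]
  have hEG : sInf (energy G '' {φ : V₁ ⊕ V₂ → ℝ | φ (Sum.inl s) = 1 ∧ φ (Sum.inr t) = 0})
      = 1 + E₁*E₂/D := by
    apply le_antisymm
    · rw [Real.sInf_le_iff (eset_bdd G _ _) (eset_nonempty G hstG)]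
      intro ε hε
      set p : ℝ := E₂/D with hp
      set r : ℝ := E₁/D with hr
      have hppos : 0 < p := by rw [hp]; positivity
      have hrpos : 0 < r := by rw [hr]; positivity
      set δ : ℝ := ε / (p^2 + r^2 + 1) with hδ
      have hδpos : 0 < δ := by rw [hδ]; positivity
      obtain ⟨x₁, hx₁mem, hx₁⟩ := Real.lt_sInf_add_pos (eset_nonempty H₁ hsu) hδpos
      obtain ⟨ψ₁, ⟨hψ₁s, hψ₁u⟩, rfl⟩ := hx₁mem
      obtain ⟨x₂, hx₂mem, hx₂⟩ := Real.lt_sInf_add_pos (eset_nonempty H₂ hvt) hδpos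
      obtain ⟨ψ₂, ⟨hψ₂v, hψ₂t⟩, rfl⟩ := hx₂mem
      rw [← hE₁def] at hx₁
      rw [← hE₂def] at hx₂
      set φ : V₁ ⊕ V₂ → ℝ :=
        Sum.elim (fun x => (1 - p) + p * ψ₁ x) (fun y => 0 + r * ψ₂ y) with hφ
      refine ⟨energy G φ, ⟨φ, ⟨?_, ?_⟩, rfl⟩, ?_⟩
      · simp [hφ, hψ₁s]
      · simp [hφ, hψ₂t]
      · rw [energy_decomp H₁ H₂ s u v t hsu hvt G hG φ]
        have e1 : energy H₁ (fun x => φ (Sum.inl x)) = p^2 * energy H₁ ψ₁ := by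
          simp only [hφ, Sum.elim_inl]
          exact energy_affine H₁ ψ₁ (1-p) p
        have e2 : energy H₂ (fun y => φ (Sum.inr y)) = r^2 * energy H₂ ψ₂ := by
          simp only [hφ, Sum.elim_inr]
          exact energy_affine H₂ ψ₂ 0 r
        have hφs : φ (Sum.inl s) = 1 := by simp [hφ, hψ₁s]
        have hφt : φ (Sum.inr t) = 0 := by simp [hφ, hψ₂t]
        have hφu : φ (Sum.inl u) = 1 - p := by simp [hφ, hψ₁u]
        have hφv : φ (Sum.inr v) = r := by simp [hφ, hψ₂v]
        rw [e1, e2, hφs, hφt, hφu, hφv]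
        have hid2 : p^2*E₁ + ((1-p) - r)^2 + r^2*E₂ = E₁*E₂/D := by
          rw [hp, hr, hD]
          field_simp
          ring
        have hδε : δ * (p^2 + r^2 + 1) = ε := by
          rw [hδ]
          field_simp
        have A := mul_lt_mul_of_pos_left hx₁ (pow_pos hppos 2)
        rw [mul_add] at A
        have B := mul_lt_mul_of_pos_left hx₂ (pow_pos hrpos 2)
        rw [mul_add] at B
        have C : p^2 * δ + r^2 * δ < ε := by nlinarith [hδpos]
        linarith [A, B, C, hid2]
    · exact le_csInf (eset_nonempty G hstG) hlow
  have hnum : 0 < 1 + E₁*E₂/D := by positivity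
  constructor
  · show 1 / sInf (energy G '' {φ : V₁ ⊕ V₂ → ℝ | φ (Sum.inl s) = 1 ∧ φ (Sum.inr t) = 0})
        = (1 + 1/E₁ + 1/E₂) / (2 + 1/E₁ + 1/E₂)
    rw [hEG, hD]
    have h1 : E₁ ≠ 0 := ne_of_gt hE₁
    have h2 : E₂ ≠ 0 := ne_of_gt hE₂
    have h3 : E₁ + E₂ + E₁*E₂ ≠ 0 := by positivity
    have h4 : (2:ℝ) + 1/E₁ + 1/E₂ ≠ 0 := by positivity
    have h5 : 1 + E₁*E₂/(E₁ + E₂ + E₁*E₂) ≠ 0 := by positivity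
    field_simp
    ring
  · show 1 / sInf (energy G '' {φ : V₁ ⊕ V₂ → ℝ | φ (Sum.inl s) = 1 ∧ φ (Sum.inr t) = 0}) < 1
    rw [hEG, div_lt_one hnum]
    have : 0 < E₁*E₂/D := by positivity
    linarith
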